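/- Let a > 0, τ ∈ (0,1), d > 0, and let φ ∈ C([−1,0]) satisfy φ(t) > 0 for t ∈ [−1,−τ), φ(−τ) = 0, φ(t) < 0 for t ∈ (−τ,0), and φ(0) = −d. If x : [−1,∞) → ℝ is a solution of the relay equation ẋ(t) = R(x(t−1)) with initial function φ, then x(t) = x0(t − ((1−τ)(a+1) + d)) for all t ≥ (1−τ)(a+1) + d, where x0 is extended T0-periodically to all of ℝ. -/

import Mathlib

/-- The relay nonlinearity: `R a x = 1` if `x ≤ 0`, and `R a x = -a` if `x > 0`. -/
noncomputable def R (a x : ℝ) : ℝ := if x ≤ 0 then 1 else -a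

/-- `x : [-1,∞) → ℝ` is a solution of the relay equation `x'(t) = R a (x (t-1))`
with initial function `φ ∈ C([-1,0])`: `x` is continuous on `[-1,∞)`, coincides
with `φ` on `[-1,0]`, and for every `t > 0` outside an exceptional set having
finitely many points in each bounded interval, `x` is differentiable at `t` with
`x'(t) = R a (x (t-1))`. -/
def IsSolution (a : ℝ) (φ x : ℝ → ℝ) : Prop :=
  ContinuousOn x (Set.Ici (-1 : ℝ)) ∧
  (∀ t ∈ Set.Icc (-1 : ℝ) 0, x t = φ t) ∧
  ∃ S : Set ℝ, (∀ A B : ℝ, (S ∩ Set.Icc A B).Finite) ∧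
    ∀ t : ℝ, 0 < t → t ∉ S → HasDerivAt x (R a (x (t - 1))) t


open Set Filter Topology

/-- If `x` is continuous on `[A,B]` and has derivative `c` on `(A,B)`, then
`x B = x A + c * (B - A)`. -/
lemma lin0 {x : ℝ → ℝ} {c A B : ℝ} (hAB : A < B) (hcont : ContinuousOn x (Icc A B))
    (hderiv : ∀ t ∈ Ioo A B, HasDerivAt x c t) : x B = x A + c * (B - A) := by
  have claim : ∀ t ∈ Ioo A B, x B = x t + c * (B - t) := by
    intro t ht
    have h := eq_of_has_deriv_right_eq (f := x) (g := fun s => x t + c * (s - t))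
      (f' := fun _ => c) (a := t) (b := B)
      (fun s hs => ((hderiv s ⟨lt_of_lt_of_le ht.1 hs.1, hs.2⟩).hasDerivWithinAt))
      (fun s hs => by
        have : HasDerivAt (fun s => x t + c * (s - t)) c s := by
          simpa using (((hasDerivAt_id s).sub_const t).const_mul c).const_add (x t)
        exact this.hasDerivWithinAt)
      (hcont.mono (Icc_subset_Icc ht.1.le le_rfl))
      (by fun_prop)
      (by simp)
    have hB : x B = x t + c * (B - t) := by simpa using h B ⟨ht.2.le, le_rfl⟩
    linarith [hB]
  have hne : (nhdsWithin A (Ioo A B)).NeBot := by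
    rw [← mem_closure_iff_nhdsWithin_neBot, closure_Ioo hAB.ne]
    exact ⟨le_rfl, hAB.le⟩
  have t1 : Filter.Tendsto (fun t => x t + c * (B - t)) (nhdsWithin A (Ioo A B))
      (nhds (x A + c * (B - A))) := by
    have : ContinuousWithinAt (fun t => x t + c * (B - t)) (Icc A B) A :=
      ((hcont A ⟨le_rfl, hAB.le⟩).add
        ((continuous_const.mul (continuous_const.sub continuous_id)).continuousWithinAt))
    exact this.mono Ioo_subset_Icc_self
  have t2 : Filter.Tendsto (fun t => x t + c * (B - t)) (nhdsWithin A (Ioo A B))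
      (nhds (x B)) := by
    refine Filter.Tendsto.congr' ?_ (tendsto_const_nhds (x := x B))
    filter_upwards [self_mem_nhdsWithin] with t ht
    exact claim t ht
  have := tendsto_nhds_unique t1 t2
  linarith [this]

lemma linF {x : ℝ → ℝ} {c : ℝ} {F : Set ℝ} (hF : F.Finite) :
    ∀ A B : ℝ, A ≤ B → ContinuousOn x (Icc A B) →
      (∀ t ∈ Ioo A B, t ∉ F → HasDerivAt x c t) → x B = x A + c * (B - A) := by
  induction F, hF using Set.Finite.induction_on with
  | empty =>
    intro A B hAB hcont hderiv
    rcases eq_or_lt_of_le hAB with h | h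
    · subst h; ring
    · have := lin0 h hcont (fun t ht => hderiv t ht (by simp))
      linarith
  | insert hp hFfin IH =>
    rename_i p F'
    intro A B hAB hcont hderiv
    by_cases hpm : p ∈ Ioo A B
    · have h1 := IH A p hpm.1.le (hcont.mono (Icc_subset_Icc le_rfl hpm.2.le))
        (fun t ht htF => hderiv t ⟨ht.1, ht.2.trans hpm.2⟩
          (by simp only [mem_insert_iff]; push_neg; exact ⟨ne_of_lt ht.2, htF⟩))
      have h2 := IH p B hpm.2.le (hcont.mono (Icc_subset_Icc hpm.1.le le_rfl))
        (fun t ht htF => hderiv t ⟨hpm.1.trans ht.1, ht.2⟩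
          (by simp only [mem_insert_iff]; push_neg; exact ⟨(ne_of_gt ht.1), htF⟩))
      linarith
    · exact IH A B hAB hcont (fun t ht htF => hderiv t ht
        (by simp only [mem_insert_iff]; push_neg;
            exact ⟨fun h => hpm (h ▸ ht), htF⟩))

/-- linear from derivative off a locally finite set -/
lemma linS {x : ℝ → ℝ} {S : Set ℝ} (hS : ∀ A B : ℝ, (S ∩ Icc A B).Finite)
    {c A B : ℝ} (hcont : ContinuousOn x (Icc A B))
    (hderiv : ∀ t ∈ Ioo A B, t ∉ S → HasDerivAt x c t) :
    ∀ t ∈ Icc A B, x t = x A + c * (t - A) := by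
  intro t ht
  exact linF (hS A B) A t ht.1 (hcont.mono (Icc_subset_Icc le_rfl ht.2))
    (fun s hs hsn => hderiv s ⟨hs.1, hs.2.trans_le ht.2⟩
      (fun hsS => hsn ⟨hsS, ⟨hs.1.le, (hs.2.le.trans ht.2)⟩⟩))

/-- unit-step induction: derivative at `t` is guaranteed once linearity is known up to `t - 1`. -/
lemma stepInduct {x : ℝ → ℝ} {S : Set ℝ} (hS : ∀ A B : ℝ, (S ∩ Icc A B).Finite)
    {c A B : ℝ} (hAB : A ≤ B) (hcont : ContinuousOn x (Icc A B))
    (key : ∀ b t : ℝ, A ≤ b → b < B →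
      (∀ s ∈ Icc A b, x s = x A + c * (s - A)) →
      b < t → t < min B (b + 1) → t ∉ S → HasDerivAt x c t) :
    ∀ t ∈ Icc A B, x t = x A + c * (t - A) := by
  have main : ∀ n : ℕ, ∀ t ∈ Icc A (min B (A + n)), x t = x A + c * (t - A) := by
    intro n
    induction n with
    | zero =>
      intro t ht
      have h1 : t ≤ A := le_trans ht.2 (by simp)
      have : t = A := le_antisymm h1 ht.1
      subst this; ring
    | succ n IH =>
      by_cases hbB : B ≤ A + n
      · intro t ht
        refine IH t ⟨ht.1, ?_⟩
        have h1 : min B (A + ((n : ℝ) + 1)) = B := min_eq_left (by linarith)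
        have h2 : min B (A + (n : ℝ)) = B := min_eq_left hbB
        rw [h2]
        refine le_trans ht.2 ?_
        push_cast
        rw [h1]
      · push_neg at hbB
        set b : ℝ := A + n with hbdef
        have hbmin : min B (A + (n : ℝ)) = b := min_eq_right hbB.le
        have hbA : A ≤ b := by
          have : (0:ℝ) ≤ n := Nat.cast_nonneg n
          linarith
        have hgood : ∀ s ∈ Icc A b, x s = x A + c * (s - A) := by
          intro s hs; exact IH s (by rwa [hbmin])
        have hder : ∀ t ∈ Ioo b (min B (b + 1)), t ∉ S → HasDerivAt x c t :=
          fun t ht hts => key b t hbA hbB hgood ht.1 ht.2 hts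
        have hble : b ≤ min B (b + 1) := le_min hbB.le (by linarith)
        have seg := linS hS (c := c) (A := b) (B := min B (b+1))
          (hcont.mono (Icc_subset_Icc hbA (min_le_left _ _))) hder
        intro t ht
        rcases le_total t b with h | h
        · exact hgood t ⟨ht.1, h⟩
        · have htle : t ≤ min B (b + 1) := by
            refine le_trans ht.2 (le_min (min_le_left _ _) ?_)
            refine le_trans (min_le_right _ _) ?_
            push_cast
            linarith
          have h1 := seg t ⟨h, htle⟩
          have h2 := hgood b ⟨hbA, le_rfl⟩
          rw [h1, h2]; ring
  intro t ht
  obtain ⟨ht1, ht2⟩ := ht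
  obtain ⟨n, hn⟩ := exists_nat_ge (B - A)
  exact main n t ⟨ht1, le_min ht2 (by linarith)⟩

/-- a solution with an initial function positive on `[-1,-τ)`,
vanishing at `-τ`, negative on `(-τ,0)` with `φ(0) = -d`, `d > 0`, coincides with
`x0 (t - ((1-τ)(a+1) + d))` for all `t ≥ (1-τ)(a+1) + d`. -/
theorem stmt_5 (a : ℝ) (ha : 0 < a) (τ : ℝ) (hτ : τ ∈ Set.Ioo (0 : ℝ) 1)
    (d : ℝ) (hd : 0 < d) (t0 T0 : ℝ)
    (ht0 : t0 = (a + 1) / a) (hT0 : T0 = (a + 1) ^ 2 / a)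
    (φ : ℝ → ℝ) (hφc : ContinuousOn φ (Set.Icc (-1 : ℝ) 0))
    (hφ1 : ∀ t ∈ Set.Ico (-1 : ℝ) (-τ), 0 < φ t) (hφτ : φ (-τ) = 0)
    (hφ2 : ∀ t ∈ Set.Ioo (-τ) (0 : ℝ), φ t < 0) (hφ0 : φ 0 = -d)
    (x : ℝ → ℝ) (hx : IsSolution a φ x)
    (x0 : ℝ → ℝ)
    (hx0per : ∀ t : ℝ, x0 (t + T0) = x0 t)
    (hx0a : ∀ t ∈ Set.Icc (0 : ℝ) 1, x0 t = t)
    (hx0b : ∀ t ∈ Set.Icc (1 : ℝ) (t0 + 1), x0 t = -a * (t - t0))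
    (hx0c : ∀ t ∈ Set.Icc (t0 + 1) T0, x0 t = t - T0) :
    ∀ t : ℝ, (1 - τ) * (a + 1) + d ≤ t →
      x t = x0 (t - ((1 - τ) * (a + 1) + d)) := by
  obtain ⟨hτ0, hτ1⟩ := hτ
  obtain ⟨hxc, hxφ, S, hS, hxd⟩ := hx
  set σ : ℝ := (1 - τ) * (a + 1) + d with hσ
  have hσexp : σ = (1 - τ) + (a * (1 - τ) + d) := by rw [hσ]; ring
  have ha1 : 0 < 1 - τ := by linarith
  have haτ : 0 < a * (1 - τ) := mul_pos ha ha1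
  have hσpos : 0 < σ := by linarith
  have hσgt : 1 - τ < σ := by linarith
  have hat0 : a * t0 = a + 1 := by rw [ht0]; field_simp
  have ht0gt : 1 < t0 := by rw [ht0, lt_div_iff₀ ha]; linarith
  have hT0eq : T0 = t0 + 1 + a := by rw [hT0, ht0]; field_simp; ring
  have hT0pos : 0 < T0 := by linarith
  -- continuity on subintervals
  have hcsub : ∀ A B : ℝ, (-1:ℝ) ≤ A → ContinuousOn x (Icc A B) := by
    intro A B hA
    exact hxc.mono (fun t ht => Set.mem_Ici.mpr (le_trans hA ht.1))
  -- derivative helpers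
  have hD1 : ∀ t : ℝ, 0 < t → t ∉ S → x (t - 1) ≤ 0 → HasDerivAt x 1 t := by
    intro t h1 h2 h3
    have h := hxd t h1 h2
    rwa [show R a (x (t - 1)) = 1 from by simp only [R, if_pos h3]] at h
  have hDa : ∀ t : ℝ, 0 < t → t ∉ S → 0 < x (t - 1) → HasDerivAt x (-a) t := by
    intro t h1 h2 h3
    have h := hxd t h1 h2
    rwa [show R a (x (t - 1)) = -a from by simp only [R, if_neg (not_le.2 h3)]] at h
  have xφ : ∀ t : ℝ, -1 ≤ t → t ≤ 0 → x t = φ t := fun t h1 h2 => hxφ t ⟨h1, h2⟩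
  have x0v : x 0 = -d := by rw [xφ 0 (by norm_num) le_rfl, hφ0]
  -- Segment 0 : x t = -d - a t on [0, 1-τ]
  have seg0 : ∀ t : ℝ, 0 ≤ t → t ≤ 1 - τ → x t = -d - a * t := by
    have hder : ∀ t ∈ Ioo (0:ℝ) (1 - τ), t ∉ S → HasDerivAt x (-a) t := by
      intro t ht hts
      refine hDa t ht.1 hts ?_
      rw [xφ (t - 1) (by linarith [ht.1]) (by linarith [ht.2])]
      exact hφ1 (t - 1) ⟨by linarith [ht.1], by linarith [ht.2]⟩
    have h := linS hS (c := -a) (A := 0) (B := 1 - τ) (hcsub 0 (1 - τ) (by norm_num)) hder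
    intro t h1 h2
    have h3 := h t ⟨h1, h2⟩
    rw [x0v] at h3; rw [h3]; ring
  have x1τ : x (1 - τ) = -d - a * (1 - τ) := seg0 (1 - τ) ha1.le le_rfl
  -- Segment 1 : x t = t - σ on [1-τ, σ+1]
  have seg1 : ∀ t : ℝ, 1 - τ ≤ t → t ≤ σ + 1 → x t = t - σ := by
    have key : ∀ b t : ℝ, 1 - τ ≤ b → b < σ + 1 →
        (∀ s ∈ Icc (1 - τ) b, x s = x (1 - τ) + 1 * (s - (1 - τ))) →
        b < t → t < min (σ + 1) (b + 1) → t ∉ S → HasDerivAt x 1 t := by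
      intro b t hb1 hb2 good ht1 ht2 hts
      have htm1 : t < σ + 1 := lt_of_lt_of_le ht2 (min_le_left _ _)
      have htm2 : t < b + 1 := lt_of_lt_of_le ht2 (min_le_right _ _)
      refine hD1 t (by linarith) hts ?_
      rcases le_total (t - 1) 0 with h | h
      · rw [xφ (t - 1) (by linarith) h]
        rcases lt_or_eq_of_le h with h0 | h0
        · exact le_of_lt (hφ2 (t - 1) ⟨by linarith, h0⟩)
        · rw [h0, hφ0]; linarith
      · rcases le_total (t - 1) (1 - τ) with h2 | h2
        · rw [seg0 (t - 1) h h2]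
          have := mul_nonneg ha.le h
          linarith
        · have hg := good (t - 1) ⟨h2, by linarith⟩
          rw [hg, x1τ]
          linarith
    have h := stepInduct hS (c := 1) (A := 1 - τ) (B := σ + 1) (by linarith)
      (hcsub (1 - τ) (σ + 1) (by linarith)) key
    intro t h1 h2
    have h3 := h t ⟨h1, h2⟩
    rw [x1τ] at h3; rw [h3, hσexp]; ring
  -- one period, part 1 : slope -a on [s+1, s+t0+1]
  have per2 : ∀ s : ℝ, 0 < s → (∀ u : ℝ, s ≤ u → u ≤ s + 1 → x u = u - s) →
      ∀ t : ℝ, s + 1 ≤ t → t ≤ s + t0 + 1 → x t = -a * (t - s - t0) := by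
    intro s hs hstart
    have xs1 : x (s + 1) = 1 := by rw [hstart (s + 1) (by linarith) le_rfl]; ring
    have key : ∀ b t : ℝ, s + 1 ≤ b → b < s + t0 + 1 →
        (∀ u ∈ Icc (s + 1) b, x u = x (s + 1) + (-a) * (u - (s + 1))) →
        b < t → t < min (s + t0 + 1) (b + 1) → t ∉ S → HasDerivAt x (-a) t := by
      intro b t hb1 hb2 good ht1 ht2 hts
      have htm1 : t < s + t0 + 1 := lt_of_lt_of_le ht2 (min_le_left _ _)
      have htm2 : t < b + 1 := lt_of_lt_of_le ht2 (min_le_right _ _)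
      refine hDa t (by linarith) hts ?_
      rcases le_total (t - 1) (s + 1) with h | h
      · rw [hstart (t - 1) (by linarith) h]; linarith
      · have hg := good (t - 1) ⟨h, by linarith⟩
        rw [hg, xs1]
        have hm := mul_lt_mul_of_pos_left (show t - 1 - (s + 1) < t0 - 1 by linarith) ha
        linarith [hat0]
    have h := stepInduct hS (c := -a) (A := s + 1) (B := s + t0 + 1) (by linarith)
      (hcsub (s + 1) (s + t0 + 1) (by linarith)) key
    intro t h1 h2
    have h3 := h t ⟨h1, h2⟩
    rw [xs1] at h3; rw [h3]
    linear_combination -1 * hat0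
  -- one period, part 2 : slope 1 on [s+t0+1, s+T0+1]
  have per3 : ∀ s : ℝ, 0 < s →
      (∀ u : ℝ, s + 1 ≤ u → u ≤ s + t0 + 1 → x u = -a * (u - s - t0)) →
      ∀ t : ℝ, s + t0 + 1 ≤ t → t ≤ s + T0 + 1 → x t = t - s - T0 := by
    intro s hs hmid
    have xst : x (s + t0 + 1) = -a := by
      rw [hmid (s + t0 + 1) (by linarith) le_rfl]; ring
    have key : ∀ b t : ℝ, s + t0 + 1 ≤ b → b < s + T0 + 1 →
        (∀ u ∈ Icc (s + t0 + 1) b, x u = x (s + t0 + 1) + 1 * (u - (s + t0 + 1))) →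
        b < t → t < min (s + T0 + 1) (b + 1) → t ∉ S → HasDerivAt x 1 t := by
      intro b t hb1 hb2 good ht1 ht2 hts
      have htm1 : t < s + T0 + 1 := lt_of_lt_of_le ht2 (min_le_left _ _)
      have htm2 : t < b + 1 := lt_of_lt_of_le ht2 (min_le_right _ _)
      refine hD1 t (by linarith) hts ?_
      rcases le_total (t - 1) (s + t0 + 1) with h | h
      · rw [hmid (t - 1) (by linarith) h]
        have := mul_nonneg ha.le (show (0:ℝ) ≤ t - 1 - s - t0 by linarith)
        linarith
      · have hg := good (t - 1) ⟨h, by linarith⟩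
        rw [hg, xst]
        linarith [hT0eq]
    have h := stepInduct hS (c := 1) (A := s + t0 + 1) (B := s + T0 + 1)
      (by linarith) (hcsub (s + t0 + 1) (s + T0 + 1) (by linarith)) key
    intro t h1 h2
    have h3 := h t ⟨h1, h2⟩
    rw [xst] at h3; rw [h3, hT0eq]; ring
  -- induction over periods : start segments
  have periods : ∀ n : ℕ, ∀ u : ℝ, σ + (n:ℝ) * T0 ≤ u → u ≤ σ + (n:ℝ) * T0 + 1 →
      x u = u - (σ + (n:ℝ) * T0) := by
    intro n
    induction n with
    | zero =>
      intro u h1 h2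
      push_cast at h1 h2 ⊢
      rw [seg1 u (by linarith) (by linarith)]; ring
    | succ n IH =>
      have hnn : (0:ℝ) ≤ (n:ℝ) * T0 := mul_nonneg (Nat.cast_nonneg n) hT0pos.le
      have hspos : (0:ℝ) < σ + (n:ℝ) * T0 := by linarith
      have h2 := per2 (σ + (n:ℝ) * T0) hspos (fun u hu1 hu2 => IH u hu1 hu2)
      have h3 := per3 (σ + (n:ℝ) * T0) hspos h2
      intro u h1 h2'
      push_cast at h1 h2' ⊢
      rw [h3 u (by linarith) (by linarith)]; ring
  -- periodic extension of x0
  have x0shift : ∀ (u : ℝ) (n : ℕ), x0 (u + (n:ℝ) * T0) = x0 u := by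
    intro u n
    induction n with
    | zero => norm_num
    | succ n IH =>
      push_cast
      have e : u + ((n:ℝ) + 1) * T0 = (u + (n:ℝ) * T0) + T0 := by ring
      rw [e, hx0per, IH]
  -- x agrees with shifted x0 on each full period
  have cover : ∀ (n : ℕ) (t : ℝ), σ + (n:ℝ) * T0 ≤ t → t ≤ σ + (n:ℝ) * T0 + T0 →
      x t = x0 (t - σ) := by
    intro n t h1 h2
    have hnn : (0:ℝ) ≤ (n:ℝ) * T0 := mul_nonneg (Nat.cast_nonneg n) hT0pos.le
    have hspos : (0:ℝ) < σ + (n:ℝ) * T0 := by linarith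
    have hstart := periods n
    have hmid := per2 (σ + (n:ℝ) * T0) hspos (fun u a' b' => hstart u a' b')
    have hend := per3 (σ + (n:ℝ) * T0) hspos hmid
    have hu : x0 (t - σ) = x0 (t - (σ + (n:ℝ) * T0)) := by
      have e : t - σ = (t - (σ + (n:ℝ) * T0)) + (n:ℝ) * T0 := by ring
      rw [e, x0shift]
    rw [hu]
    rcases le_total t (σ + (n:ℝ) * T0 + 1) with hc1 | hc1
    · rw [hstart t h1 hc1, hx0a (t - (σ + (n:ℝ) * T0)) ⟨by linarith, by linarith⟩]
    · rcases le_total t (σ + (n:ℝ) * T0 + t0 + 1) with hc2 | hc2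
      · rw [hmid t hc1 hc2, hx0b (t - (σ + (n:ℝ) * T0)) ⟨by linarith, by linarith⟩]
      · rw [hend t hc2 (by linarith), hx0c (t - (σ + (n:ℝ) * T0)) ⟨by linarith, by linarith⟩]
  -- conclusion
  intro t hts
  set n : ℕ := ⌊(t - σ) / T0⌋₊ with hn
  have h0 : 0 ≤ (t - σ) / T0 := div_nonneg (by linarith) hT0pos.le
  have hle : (n:ℝ) ≤ (t - σ) / T0 := Nat.floor_le h0
  have hlt : (t - σ) / T0 < (n:ℝ) + 1 := Nat.lt_floor_add_one _
  have h1 : (n:ℝ) * T0 ≤ t - σ := (le_div_iff₀ hT0pos).1 hle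
  have h2 : t - σ < ((n:ℝ) + 1) * T0 := (div_lt_iff₀ hT0pos).1 hlt
  exact cover n t (by linarith) (by nlinarith)
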